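/- Let X be a Banach space and let W, Y, Z be closed subspaces of X with W ⊆ Y and W ⊆ Z. Then A((W^⊥, Y), (W^⊥, Z)) ≥ a(Y/W, Z/W), where W^⊥ ⊆ X^* is the annihilator of W and Y/W, Z/W are viewed as subspaces of the quotient Banach space X/W with the quotient norm. In particular, if A((W^⊥, Y), (W^⊥, Z)) = 0 then Y/W and Z/W do not form a topological direct sum in X/W. -/

import Mathlib

open Filter Topology
open scoped ENNReal

noncomputable section

/-- The angle `a(Y,Z) = inf {‖y - z‖ / ‖y + z‖ : y ∈ Y, z ∈ Z, y + z ≠ 0}`. -/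
def subAngle {E : Type*} [SeminormedAddCommGroup E] [NormedSpace ℝ E]
    (Y Z : Submodule ℝ E) : ℝ≥0∞ :=
  ⨅ (y : Y) (z : Z) (_ : (y : E) + z ≠ 0),
    ENNReal.ofReal ‖(y : E) - z‖ / ENNReal.ofReal ‖(y : E) + z‖

/-- Two subspaces `U`, `V` form a topological direct sum. -/
def IsTopDirectSum {E : Type*} [SeminormedAddCommGroup E] [NormedSpace ℝ E]
    (U V : Submodule ℝ E) : Prop :=
  U ⊓ V = ⊥ ∧ IsClosed ((U ⊔ V : Submodule ℝ E) : Set E) ∧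
    ∃ C : ℝ, ∀ u ∈ U, ∀ v ∈ V, ‖u‖ ≤ C * ‖u + v‖

/-- The annihilator `W^⊥ ⊆ X^*` of a subspace `W ⊆ X` in the topological dual. -/
def dualAnn {E : Type*} [SeminormedAddCommGroup E] [NormedSpace ℝ E]
    (W : Submodule ℝ E) : Submodule ℝ (E →L[ℝ] ℝ) where
  carrier := {f | ∀ x ∈ W, f x = 0}
  add_mem' := by
    intro f g hf hg x hx
    simp [hf x hx, hg x hx]
  zero_mem' := by intro x hx; simp
  smul_mem' := by
    intro c f hf x hx
    simp [hf x hx]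

/-- The angle `A((Y_*,Y),(Z_*,Z))` between two QS-pairs:
`inf ‖y-z‖·‖y^*-z^*‖ / |y^*(y) - z^*(z)|` over `y ∈ Y`, `z ∈ Z`, `y^* ∈ Y_*`, `z^* ∈ Z_*`
with `y ≠ z`, `y^* ≠ z^*`, `y^*(z) = z^*(y) = 0`. -/
def pairAngle {E : Type*} [SeminormedAddCommGroup E] [NormedSpace ℝ E]
    (Ys : Submodule ℝ (E →L[ℝ] ℝ)) (Y : Submodule ℝ E)
    (Zs : Submodule ℝ (E →L[ℝ] ℝ)) (Z : Submodule ℝ E) : ℝ≥0∞ :=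
  ⨅ (y : Y) (z : Z) (ys : Ys) (zs : Zs) (_ : (y : E) ≠ (z : E))
    (_ : (ys : E →L[ℝ] ℝ) ≠ (zs : E →L[ℝ] ℝ))
    (_ : (ys : E →L[ℝ] ℝ) z = 0) (_ : (zs : E →L[ℝ] ℝ) y = 0),
    ENNReal.ofReal (‖(y : E) - (z : E)‖ * ‖(ys : E →L[ℝ] ℝ) - (zs : E →L[ℝ] ℝ)‖) /
      ENNReal.ofReal |(ys : E →L[ℝ] ℝ) y - (zs : E →L[ℝ] ℝ) z|

/-- If `f` vanishes on `W`, then `|f x| ≤ ‖f‖ · ‖x‖_{X/W}`. -/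
private lemma abs_le_norm_mul_mkQ {X : Type*} [NormedAddCommGroup X] [NormedSpace ℝ X]
    (W : Submodule ℝ X) (f : X →L[ℝ] ℝ) (hf : ∀ w ∈ W, f w = 0) (x : X) :
    |f x| ≤ ‖f‖ * ‖W.mkQ x‖ := by
  rcases eq_or_ne f 0 with rfl | hf0
  · simp [mul_nonneg (norm_nonneg _) (norm_nonneg _)]
  have hfpos : 0 < ‖f‖ := norm_pos_iff.mpr hf0
  refine le_of_forall_pos_le_add fun ε hε => ?_
  obtain ⟨m, hm, hm'⟩ := Submodule.Quotient.norm_mk_lt (W.mkQ x) (div_pos hε hfpos)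
  have hmem : m - x ∈ W := (Submodule.Quotient.eq W).mp (by rw [hm, Submodule.mkQ_apply])
  have hfx : f m = f x := by
    have : f m - f x = 0 := by simpa using hf _ hmem
    linarith
  calc |f x| = |f m| := by rw [hfx]
    _ ≤ ‖f‖ * ‖m‖ := by simpa using f.le_opNorm m
    _ ≤ ‖f‖ * (‖W.mkQ x‖ + ε / ‖f‖) := by nlinarith
    _ = ‖f‖ * ‖W.mkQ x‖ + ε := by field_simp

/-- In the quotient by a closed subspace, nonzero elements have positive norm. -/
private lemma quot_norm_pos {X : Type*} [NormedAddCommGroup X] [NormedSpace ℝ X]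
    {W : Submodule ℝ X} (hW : IsClosed (W : Set X)) {q : X ⧸ W} (hq : q ≠ 0) : 0 < ‖q‖ := by
  obtain ⟨x, rfl⟩ := Submodule.Quotient.mk_surjective W q
  rcases (norm_nonneg (Submodule.Quotient.mk x : X ⧸ W)).lt_or_eq with h | h
  · exact h
  · exfalso
    apply hq
    rw [Submodule.Quotient.mk_eq_zero]
    have hm : x ∈ closure ((W.toAddSubgroup : Set X)) := (QuotientAddGroup.norm_mk_eq_zero_iff_mem_closure (S := W.toAddSubgroup) (m := x)).mp h.symm
    rwa [show closure ((W.toAddSubgroup : Set X)) = W from hW.closure_eq] at hm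

/-- For closed subspaces `W ⊆ Y` and `W ⊆ Z` of a Banach space `X`,
`A((W^⊥, Y), (W^⊥, Z)) ≥ a(Y/W, Z/W)`, where `Y/W` and `Z/W` are viewed as subspaces of the
quotient `X/W`. In particular, if `A((W^⊥, Y), (W^⊥, Z)) = 0` then `Y/W` and `Z/W` do not form
a topological direct sum in `X/W`. -/
theorem pairAngle_ge_quotient_angle (X : Type*) [NormedAddCommGroup X] [NormedSpace ℝ X]
    [CompleteSpace X] (W Y Z : Submodule ℝ X)
    (hW : IsClosed (W : Set X)) (hY : IsClosed (Y : Set X)) (hZ : IsClosed (Z : Set X))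
    (hWY : W ≤ Y) (hWZ : W ≤ Z) :
    subAngle (Y.map W.mkQ) (Z.map W.mkQ) ≤ pairAngle (dualAnn W) Y (dualAnn W) Z ∧
      (pairAngle (dualAnn W) Y (dualAnn W) Z = 0 →
        ¬ IsTopDirectSum (Y.map W.mkQ) (Z.map W.mkQ)) := by
  have h1 : subAngle (Y.map W.mkQ) (Z.map W.mkQ) ≤ pairAngle (dualAnn W) Y (dualAnn W) Z := by
    rw [subAngle, pairAngle]
    refine le_iInf fun y => le_iInf fun z => le_iInf fun ys => le_iInf fun zs =>
      le_iInf fun hyz => le_iInf fun hys => le_iInf fun hysz => le_iInf fun hzsy => ?_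
    have hysW : ∀ w ∈ W, (ys : X →L[ℝ] ℝ) w = 0 := ys.2
    have hzsW : ∀ w ∈ W, (zs : X →L[ℝ] ℝ) w = 0 := zs.2
    set f : X →L[ℝ] ℝ := (ys : X →L[ℝ] ℝ) - zs with hfdef
    have hfW : ∀ w ∈ W, f w = 0 := fun w hw => by
      simp [hfdef, ContinuousLinearMap.sub_apply, hysW w hw, hzsW w hw]
    have hfval : (ys : X →L[ℝ] ℝ) y - (zs : X →L[ℝ] ℝ) z = f ((y : X) + z) := by
      simp [hfdef, ContinuousLinearMap.sub_apply, map_add, hysz, hzsy]; ring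
    have hfpos : 0 < ‖f‖ := norm_pos_iff.mpr (sub_ne_zero.mpr hys)
    have hyzpos : 0 < ‖(y : X) - z‖ := norm_pos_iff.mpr (sub_ne_zero.mpr hyz)
    rcases (abs_nonneg (f ((y : X) + z))).eq_or_lt with h0 | hpos
    · rw [hfval, ← h0]
      rw [ENNReal.ofReal_zero, ENNReal.div_zero (by positivity)]
      exact le_top
    · have key : |f ((y : X) + z)| ≤ ‖f‖ * ‖W.mkQ ((y : X) + z)‖ :=
        abs_le_norm_mul_mkQ W f hfW _
      have hqpos : 0 < ‖W.mkQ ((y : X) + z)‖ := by nlinarith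
      set yq : Y.map W.mkQ := ⟨W.mkQ y, ⟨(y : X), y.2, rfl⟩⟩
      set zq : Z.map W.mkQ := ⟨W.mkQ z, ⟨(z : X), z.2, rfl⟩⟩
      have hcoe : (yq : X ⧸ W) + zq = W.mkQ ((y : X) + z) := by simp [yq, zq]
      have hcoe' : (yq : X ⧸ W) - zq = W.mkQ ((y : X) - z) := by simp [yq, zq]
      have hne : (yq : X ⧸ W) + zq ≠ 0 := by
        rw [hcoe]; intro h; rw [h, norm_zero] at hqpos; exact lt_irrefl 0 hqpos
      refine le_trans (iInf_le_of_le yq (iInf_le_of_le zq (iInf_le _ hne))) ?_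
      rw [hcoe, hcoe', hfval]
      rw [← ENNReal.ofReal_div_of_pos hqpos, ← ENNReal.ofReal_div_of_pos hpos]
      apply ENNReal.ofReal_le_ofReal
      rw [div_le_div_iff₀ hqpos hpos]
      have hmk : ‖W.mkQ ((y : X) - z)‖ ≤ ‖(y : X) - z‖ := Submodule.Quotient.norm_mk_le _ _
      nlinarith [abs_nonneg (f ((y : X) + z)), norm_nonneg (W.mkQ ((y : X) - z))]
  refine ⟨h1, fun h0 hds => ?_⟩
  obtain ⟨-, -, C, hC⟩ := hds
  have hsub0 : subAngle (Y.map W.mkQ) (Z.map W.mkQ) = 0 :=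
    le_antisymm (h1.trans h0.le) (zero_le)
  set C' : ℝ := max C 1 with hC'def
  have hC1 : (1 : ℝ) ≤ C' := le_max_right _ _
  have hcpos : (0 : ℝ) < 1 / (2 * C' + 1) := by positivity
  have hlow : ENNReal.ofReal (1 / (2 * C' + 1)) ≤ subAngle (Y.map W.mkQ) (Z.map W.mkQ) := by
    rw [subAngle]
    refine le_iInf fun u => le_iInf fun v => le_iInf fun huv => ?_
    have hden : 0 < ‖(u : X ⧸ W) + v‖ := quot_norm_pos hW huv
    have hu : ‖(u : X ⧸ W)‖ ≤ C * ‖(u : X ⧸ W) + -(v : X ⧸ W)‖ :=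
      hC _ u.2 _ (neg_mem v.2)
    have hu' : ‖(u : X ⧸ W)‖ ≤ C' * ‖(u : X ⧸ W) - v‖ := by
      rw [← sub_eq_add_neg] at hu
      have := norm_nonneg ((u : X ⧸ W) - v)
      nlinarith [le_max_left C (1 : ℝ)]
    have hv : ‖(v : X ⧸ W)‖ ≤ ‖(u : X ⧸ W)‖ + ‖(u : X ⧸ W) - v‖ := by
      have := norm_sub_le (u : X ⧸ W) ((u : X ⧸ W) - v)
      simpa using this
    have hsum : ‖(u : X ⧸ W) + v‖ ≤ (2 * C' + 1) * ‖(u : X ⧸ W) - v‖ := by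
      have := norm_add_le (u : X ⧸ W) (v : X ⧸ W)
      nlinarith
    rw [ENNReal.le_div_iff_mul_le (Or.inl (by simp only [ne_eq, ENNReal.ofReal_eq_zero, not_le]; exact hden)) (Or.inl ENNReal.ofReal_ne_top)]
    rw [← ENNReal.ofReal_mul hcpos.le]
    apply ENNReal.ofReal_le_ofReal
    rw [div_mul_eq_mul_div, one_mul, div_le_iff₀ (by positivity)]
    nlinarith [norm_nonneg ((u : X ⧸ W) - v)]
  rw [hsub0, le_zero_iff, ENNReal.ofReal_eq_zero] at hlow
  linarith
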